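/- Let X and Y be nonempty subsets of A⁺. If X and Y are bifix codes, then XY and YX are bifix codes and the products XY and YX are unambiguous; if moreover X and Y are maximal bifix codes and thin, then XY and YX are maximal bifix codes and thin. -/

import Mathlib

open List

/-- The (catenation) product `XY` of two languages. -/
def ProdL {A : Type*} (X Y : Set (List A)) : Set (List A) :=
  {z | ∃ x ∈ X, ∃ y ∈ Y, z = x ++ y}

/-- The product `XY` is unambiguous. -/
def Unamb {A : Type*} (X Y : Set (List A)) : Prop :=
  ∀ x₁ ∈ X, ∀ y₁ ∈ Y, ∀ x₂ ∈ X, ∀ y₂ ∈ Y,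
    x₁ ++ y₁ = x₂ ++ y₂ → x₁ = x₂ ∧ y₁ = y₂

/-- `X ⊆ A⁺` is a code: any equality of two (nonempty) factorizations over `X`
forces the factorizations to coincide. -/
def IsCode {A : Type*} (X : Set (List A)) : Prop :=
  ([] : List A) ∉ X ∧
  ∀ xs ys : List (List A), xs ≠ [] → ys ≠ [] →
    (∀ w ∈ xs, w ∈ X) → (∀ w ∈ ys, w ∈ X) → xs.flatten = ys.flatten → xs = ys

/-- `us` is an alternative factorization on `(X, Y)`: it has length at least 2,
its words lie in `X ∪ Y`, and consecutive words alternate between `X` and `Y`. -/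
def IsAltFact {A : Type*} (X Y : Set (List A)) (us : List (List A)) : Prop :=
  2 ≤ us.length ∧ (∀ w ∈ us, w ∈ X ∪ Y) ∧
  us.Chain' (fun u v => (u ∈ X → v ∈ Y) ∧ (u ∈ Y → v ∈ X))

/-- Two alternative factorizations are similar: they begin with words in the same
set (`X` or `Y`) and they end with words in the same set. -/
def SimilarFact {A : Type*} (X Y : Set (List A)) (us vs : List (List A)) : Prop :=
  (∀ u ∈ us.head?, ∀ v ∈ vs.head?, (u ∈ X ∧ v ∈ X) ∨ (u ∈ Y ∧ v ∈ Y)) ∧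
  (∀ u ∈ us.getLast?, ∀ v ∈ vs.getLast?, (u ∈ X ∧ v ∈ X) ∨ (u ∈ Y ∧ v ∈ Y))

/-- `(X, Y)` is an alternative code: `X, Y` are nonempty subsets of `A⁺` and no
word admits two different similar alternative factorizations on `(X, Y)`. -/
def IsAltCode {A : Type*} (X Y : Set (List A)) : Prop :=
  X.Nonempty ∧ Y.Nonempty ∧ ([] : List A) ∉ X ∧ ([] : List A) ∉ Y ∧
  ∀ us vs : List (List A), IsAltFact X Y us → IsAltFact X Y vs →
    SimilarFact X Y us vs → us.flatten = vs.flatten → us = vs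

/-- `Z` is an alt-induced code: `Z = XY` for some alternative code `(X, Y)`. -/
def IsAltInduced {A : Type*} (Z : Set (List A)) : Prop :=
  ∃ X Y : Set (List A), IsAltCode X Y ∧ Z = ProdL X Y

/-- `X ⊆ A⁺` is a prefix code: no word of `X` is a proper prefix of another word of `X`. -/
def IsPrefixCode {A : Type*} (X : Set (List A)) : Prop :=
  ([] : List A) ∉ X ∧ ∀ u ∈ X, ∀ v ∈ X, u <+: v → u = v

/-- `X ⊆ A⁺` is a suffix code: no word of `X` is a proper suffix of another word of `X`. -/
def IsSuffixCode {A : Type*} (X : Set (List A)) : Prop :=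
  ([] : List A) ∉ X ∧ ∀ u ∈ X, ∀ v ∈ X, u <:+ v → u = v

/-- A bifix code is both a prefix code and a suffix code. -/
def IsBifixCode {A : Type*} (X : Set (List A)) : Prop :=
  IsPrefixCode X ∧ IsSuffixCode X

/-- A maximal prefix code: a prefix code not properly contained in another prefix code. -/
def IsMaximalPrefixCode {A : Type*} (X : Set (List A)) : Prop :=
  IsPrefixCode X ∧ ∀ X' : Set (List A), IsPrefixCode X' → X ⊆ X' → X = X'

/-- A maximal suffix code: a suffix code not properly contained in another suffix code. -/
def IsMaximalSuffixCode {A : Type*} (X : Set (List A)) : Prop :=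
  IsSuffixCode X ∧ ∀ X' : Set (List A), IsSuffixCode X' → X ⊆ X' → X = X'

/-- A maximal bifix code: a bifix code not properly contained in another bifix code. -/
def IsMaximalBifixCode {A : Type*} (X : Set (List A)) : Prop :=
  IsBifixCode X ∧ ∀ X' : Set (List A), IsBifixCode X' → X ⊆ X' → X = X'

/-- `X` is thin: some word `w` is not a factor (infix) of any word of `X`. -/
def IsThin {A : Type*} (X : Set (List A)) : Prop :=
  ∃ w : List A, ∀ u v : List A, u ++ w ++ v ∉ X

/-- The left quotient `X⁻¹Y = {u | ∃ x ∈ X, xu ∈ Y}`. -/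
def lQuot {A : Type*} (X Y : Set (List A)) : Set (List A) :=
  {u | ∃ x ∈ X, x ++ u ∈ Y}

/-- The right quotient `XY⁻¹ = {u | ∃ y ∈ Y, uy ∈ X}`. -/
def rQuot {A : Type*} (X Y : Set (List A)) : Set (List A) :=
  {u | ∃ y ∈ Y, u ++ y ∈ X}

/-- `(X, Y)` is a strong alternative code: an alternative code with
`X⁻¹(XY) ⊆ Y` and `(XY)Y⁻¹ ⊆ X`. -/
def IsStrongAltCode {A : Type*} (X Y : Set (List A)) : Prop :=
  IsAltCode X Y ∧ lQuot X (ProdL X Y) ⊆ Y ∧ rQuot (ProdL X Y) Y ⊆ X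

/-- `Z` is a strong alt-induced code: `Z = XY` for some strong alternative code `(X, Y)`. -/
def IsStrongAltInduced {A : Type*} (Z : Set (List A)) : Prop :=
  ∃ X Y : Set (List A), IsStrongAltCode X Y ∧ Z = ProdL X Y

/-- `Z_a`: the set of words of `Z` beginning with the letter `a`. -/
def Za {A : Type*} (a : A) (Z : Set (List A)) : Set (List A) :=
  {w ∈ Z | w.head? = some a}

/-- A finite code `Z` is of standard form: all its words have length at least 2,
not all of its words begin with the same letter, and not all of its words end
with the same letter. -/
def StandardForm {A : Type*} (Z : Set (List A)) : Prop :=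
  (∀ w ∈ Z, 2 ≤ w.length) ∧
  ¬ (∃ a : A, ∀ w ∈ Z, w.head? = some a) ∧
  ¬ (∃ a : A, ∀ w ∈ Z, w.getLast? = some a)

/-! ### Auxiliary material for `stmt7` -/

section Stmt7Aux

variable {A : Type*}

/-- prefix-comparability with a language -/
def PCmp (X : Set (List A)) (v : List A) : Prop := ∃ x ∈ X, x <+: v ∨ v <+: x

/-- suffix-comparability with a language -/
def SCmp (X : Set (List A)) (v : List A) : Prop := ∃ x ∈ X, x <:+ v ∨ v <:+ x

theorem suffix_append_inj {x y l : List A} (h : x ++ l <:+ y ++ l) : x <:+ y := by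
  rw [← List.reverse_prefix] at h ⊢
  simp only [List.reverse_append] at h
  exact (List.prefix_append_right_inj _).mp h

theorem prefixCode_prod {X Y : Set (List A)} (hX : IsPrefixCode X) (hY : IsPrefixCode Y) :
    IsPrefixCode (ProdL X Y) := by
  constructor
  · rintro ⟨x, hx, y, hy, h⟩
    obtain ⟨h1, -⟩ := List.append_eq_nil_iff.mp h.symm
    exact hX.1 (h1 ▸ hx)
  · rintro u hu u' hu' hp
    obtain ⟨x₁, hx₁, y₁, hy₁, rfl⟩ := hu
    obtain ⟨x₂, hx₂, y₂, hy₂, rfl⟩ := hu'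
    have h1 : x₁ <+: x₂ ++ y₂ := (x₁.prefix_append y₁).trans hp
    have hx : x₁ = x₂ := by
      rcases List.prefix_or_prefix_of_prefix h1 (x₂.prefix_append y₂) with h | h
      · exact hX.2 _ hx₁ _ hx₂ h
      · exact (hX.2 _ hx₂ _ hx₁ h).symm
    subst hx
    have h2 : y₁ <+: y₂ := (List.prefix_append_right_inj x₁).mp hp
    rw [hY.2 _ hy₁ _ hy₂ h2]

theorem suffixCode_prod {X Y : Set (List A)} (hX : IsSuffixCode X) (hY : IsSuffixCode Y) :
    IsSuffixCode (ProdL X Y) := by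
  constructor
  · rintro ⟨x, hx, y, hy, h⟩
    obtain ⟨h1, -⟩ := List.append_eq_nil_iff.mp h.symm
    exact hX.1 (h1 ▸ hx)
  · rintro u hu u' hu' hp
    obtain ⟨x₁, hx₁, y₁, hy₁, rfl⟩ := hu
    obtain ⟨x₂, hx₂, y₂, hy₂, rfl⟩ := hu'
    have h1 : y₁ <:+ x₂ ++ y₂ := (List.suffix_append x₁ y₁).trans hp
    have hy : y₁ = y₂ := by
      rcases List.suffix_or_suffix_of_suffix h1 (List.suffix_append x₂ y₂) with h | h
      · exact hY.2 _ hy₁ _ hy₂ h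
      · exact (hY.2 _ hy₂ _ hy₁ h).symm
    subst hy
    have h2 : x₁ <:+ x₂ := suffix_append_inj hp
    rw [hX.2 _ hx₁ _ hx₂ h2]

theorem unamb_of_prefixCode {X Y : Set (List A)} (hX : IsPrefixCode X) : Unamb X Y := by
  intro x₁ hx₁ y₁ hy₁ x₂ hx₂ y₂ hy₂ h
  have h1 : x₁ <+: x₂ ++ y₂ := h ▸ x₁.prefix_append y₁
  have hx : x₁ = x₂ := by
    rcases List.prefix_or_prefix_of_prefix h1 (x₂.prefix_append y₂) with h' | h'
    · exact hX.2 _ hx₁ _ hx₂ h'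
    · exact (hX.2 _ hx₂ _ hx₁ h').symm
  subst hx
  exact ⟨rfl, List.append_cancel_left h⟩

theorem maxBifix_of_cmp {Z : Set (List A)} (hZ : IsBifixCode Z) (h : ∀ v, PCmp Z v) :
    IsMaximalBifixCode Z := by
  refine ⟨hZ, fun Z' hZ' hsub => Set.Subset.antisymm hsub fun z' hz' => ?_⟩
  obtain ⟨z, hz, hc | hc⟩ := h z'
  · have he := hZ'.1.2 _ (hsub hz) _ hz' hc
    exact he ▸ hz
  · have he := hZ'.1.2 _ hz' _ (hsub hz) hc
    exact he ▸ hz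

theorem dichotomy {X : Set (List A)} (hne : X.Nonempty) (h : IsMaximalBifixCode X) :
    (∀ v, PCmp X v) ∨ (∀ v, SCmp X v) := by
  by_contra hc
  push_neg at hc
  obtain ⟨h1, h2⟩ := hc
  obtain ⟨v₁, hv₁⟩ := h1
  obtain ⟨v₂, hv₂⟩ := h2
  obtain ⟨x₀, hx₀⟩ := hne
  have hv₁ne : v₁ ≠ [] := by rintro rfl; exact hv₁ ⟨x₀, hx₀, Or.inr List.nil_prefix⟩
  set y := v₁ ++ v₂ with hy
  have hyne : y ≠ [] := by simp [hy, hv₁ne]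
  have hnp : ¬ PCmp X y := by
    rintro ⟨x, hx, hxy | hyx⟩
    · rcases List.prefix_or_prefix_of_prefix hxy (List.prefix_append v₁ v₂) with h' | h'
      · exact hv₁ ⟨x, hx, Or.inl h'⟩
      · exact hv₁ ⟨x, hx, Or.inr h'⟩
    · exact hv₁ ⟨x, hx, Or.inr ((List.prefix_append v₁ v₂).trans hyx)⟩
  have hns : ¬ SCmp X y := by
    rintro ⟨x, hx, hxy | hyx⟩
    · rcases List.suffix_or_suffix_of_suffix hxy (List.suffix_append v₁ v₂) with h' | h'
      · exact hv₂ ⟨x, hx, Or.inl h'⟩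
      · exact hv₂ ⟨x, hx, Or.inr h'⟩
    · exact hv₂ ⟨x, hx, Or.inr ((List.suffix_append v₁ v₂).trans hyx)⟩
  have hbig : IsBifixCode (X ∪ {y}) := by
    constructor
    · constructor
      · rintro (h' | h')
        · exact h.1.1.1 h'
        · exact hyne (Set.mem_singleton_iff.mp h').symm
      · rintro u (hu | hu) u' (hu' | hu') hpre
        · exact h.1.1.2 _ hu _ hu' hpre
        · rw [Set.mem_singleton_iff.mp hu'] at hpre
          exact (hnp ⟨u, hu, Or.inl hpre⟩).elim
        · rw [Set.mem_singleton_iff.mp hu] at hpre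
          exact (hnp ⟨u', hu', Or.inr hpre⟩).elim
        · rw [Set.mem_singleton_iff.mp hu, Set.mem_singleton_iff.mp hu']
    · constructor
      · rintro (h' | h')
        · exact h.1.2.1 h'
        · exact hyne (Set.mem_singleton_iff.mp h').symm
      · rintro u (hu | hu) u' (hu' | hu') hpre
        · exact h.1.2.2 _ hu _ hu' hpre
        · rw [Set.mem_singleton_iff.mp hu'] at hpre
          exact (hns ⟨u, hu, Or.inl hpre⟩).elim
        · rw [Set.mem_singleton_iff.mp hu] at hpre
          exact (hns ⟨u', hu', Or.inr hpre⟩).elim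
        · rw [Set.mem_singleton_iff.mp hu, Set.mem_singleton_iff.mp hu']
  have heq := h.2 _ hbig Set.subset_union_left
  have hyX : y ∈ X ∪ {y} := Set.mem_union_right _ rfl
  rw [← heq] at hyX
  exact hnp ⟨y, hyX, Or.inl (List.prefix_refl y)⟩

theorem thin_nonempty_witness {X : Set (List A)} (hX : X.Nonempty) (ht : IsThin X) :
    ∃ w : List A, w ≠ [] ∧ ∀ u t, u ++ w ++ t ∉ X := by
  obtain ⟨w, hw⟩ := ht
  refine ⟨w, ?_, hw⟩
  rintro rfl
  obtain ⟨x, hx⟩ := hX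
  exact hw x [] (by simpa using hx)

theorem thin_prod {X Y : Set (List A)} (hx : IsThin X) (hy : IsThin Y) : IsThin (ProdL X Y) := by
  obtain ⟨wx, hwx⟩ := hx
  obtain ⟨wy, hwy⟩ := hy
  refine ⟨wx ++ wy, ?_⟩
  rintro u v ⟨x, hxm, y, hym, heq⟩
  have hz : u ++ wx <+: x ++ y := ⟨wy ++ v, by rw [← heq]; simp [List.append_assoc]⟩
  by_cases hlen : (u ++ wx).length ≤ x.length
  · have h2 : u ++ wx <+: x := List.prefix_of_prefix_length_le hz (x.prefix_append y) hlen
    obtain ⟨r, hr⟩ := h2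
    rw [← hr] at hxm
    exact hwx u r hxm
  · push_neg at hlen
    have h1 : x <+: u ++ wx := List.prefix_of_prefix_length_le (x.prefix_append y) hz hlen.le
    obtain ⟨r, hr⟩ := h1
    have hkey : x ++ (r ++ (wy ++ v)) = x ++ y := by
      calc x ++ (r ++ (wy ++ v)) = (x ++ r) ++ (wy ++ v) := by rw [List.append_assoc]
        _ = (u ++ wx) ++ (wy ++ v) := by rw [hr]
        _ = u ++ (wx ++ wy) ++ v := by simp [List.append_assoc]
        _ = x ++ y := heq
    have hy' : y = r ++ wy ++ v := by
      have h3 := List.append_cancel_left hkey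
      rw [← h3, List.append_assoc]
    rw [hy'] at hym
    exact hwy r v hym

theorem pcmp_prod {X Y : Set (List A)} (hY : Y.Nonempty)
    (hXc : ∀ v, PCmp X v) (hYc : ∀ v, PCmp Y v) : ∀ v, PCmp (ProdL X Y) v := by
  intro v
  obtain ⟨x, hx, hc | hc⟩ := hXc v
  · obtain ⟨v', rfl⟩ := hc
    obtain ⟨y, hy, hc' | hc'⟩ := hYc v'
    · obtain ⟨t, rfl⟩ := hc'
      exact ⟨x ++ y, ⟨x, hx, y, hy, rfl⟩, Or.inl ⟨t, by simp [List.append_assoc]⟩⟩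
    · exact ⟨x ++ y, ⟨x, hx, y, hy, rfl⟩, Or.inr ((List.prefix_append_right_inj x).mpr hc')⟩
  · obtain ⟨y, hy⟩ := hY
    exact ⟨x ++ y, ⟨x, hx, y, hy, rfl⟩, Or.inr (hc.trans (x.prefix_append y))⟩

theorem scmp_prod {X Y : Set (List A)} (hX : X.Nonempty)
    (hXc : ∀ v, SCmp X v) (hYc : ∀ v, SCmp Y v) : ∀ v, SCmp (ProdL X Y) v := by
  intro v
  obtain ⟨y, hy, hc | hc⟩ := hYc v
  · obtain ⟨v', rfl⟩ := hc
    obtain ⟨x, hx, hc' | hc'⟩ := hXc v'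
    · obtain ⟨t, rfl⟩ := hc'
      exact ⟨x ++ y, ⟨x, hx, y, hy, rfl⟩, Or.inl ⟨t, by simp [List.append_assoc]⟩⟩
    · obtain ⟨t, rfl⟩ := hc'
      exact ⟨(t ++ v') ++ y, ⟨t ++ v', hx, y, hy, rfl⟩, Or.inr ⟨t, by rw [List.append_assoc]⟩⟩
  · obtain ⟨x, hx⟩ := hX
    exact ⟨x ++ y, ⟨x, hx, y, hy, rfl⟩, Or.inr (hc.trans (List.suffix_append x y))⟩

/-- The finset of all words of length `n`. -/
def Ln (A : Type*) [Fintype A] [DecidableEq A] (n : ℕ) : Finset (List A) :=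
  (Finset.univ : Finset (Fin n → A)).image List.ofFn

theorem mem_Ln [Fintype A] [DecidableEq A] {n : ℕ} {v : List A} :
    v ∈ Ln A n ↔ v.length = n := by
  constructor
  · intro h
    obtain ⟨f, -, rfl⟩ := Finset.mem_image.mp h
    simp
  · rintro rfl
    exact Finset.mem_image.mpr ⟨v.get, Finset.mem_univ _, List.ofFn_get v⟩

theorem card_Ln [Fintype A] [DecidableEq A] (n : ℕ) :
    (Ln A n).card = (Fintype.card A) ^ n := by
  rw [Ln, Finset.card_image_of_injective _ List.ofFn_injective, Finset.card_univ,
    Fintype.card_fun, Fintype.card_fin]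

theorem key [Fintype A] (X : Set (List A)) (hp : IsPrefixCode X)
    (w : List A) (hw : w ≠ []) (hthin : ∀ u t, u ++ w ++ t ∉ X)
    (hS : ∀ v, SCmp X v) (v₀ : List A) (hv₀ : ¬ PCmp X v₀) : False := by
  classical
  set q := Fintype.card A with hqdef
  set d := v₀.length with hddef
  set L := w.length with hLdef
  have hL : 1 ≤ L := List.length_pos_iff.mpr hw
  set avoid : ℕ → Finset (List A) :=
    (fun n => (Ln A n).filter (fun v => ∀ u t, v ≠ u ++ w ++ t)) with havoid
  -- Step A : counting lower bound on `avoid`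
  have stepA : ∀ n, d ≤ n → q ^ (n - d) ≤ (avoid n).card := by
    intro n hdn
    have hsub : Ln A n ⊆ ((Ln A n).filter (fun v => ∃ x ∈ X, x <:+ v)) ∪ avoid n := by
      intro v hv
      obtain ⟨x, hx, hxv | hvx⟩ := hS v
      · exact Finset.mem_union_left _ (Finset.mem_filter.mpr ⟨hv, x, hx, hxv⟩)
      · refine Finset.mem_union_right _ (Finset.mem_filter.mpr ⟨hv, ?_⟩)
        rintro u t rfl
        obtain ⟨r, rfl⟩ := hvx
        exact hthin (r ++ u) t (by simpa [List.append_assoc] using hx)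
    have h1 : q ^ n ≤ ((Ln A n).filter (fun v => ∃ x ∈ X, x <:+ v)).card + (avoid n).card := by
      calc q ^ n = (Ln A n).card := (card_Ln n).symm
        _ ≤ _ := le_trans (Finset.card_le_card hsub) (Finset.card_union_le _ _)
    -- decomposition via choice
    have hex : ∀ v : List A, (∃ x ∈ X, x <:+ v) →
        ∃ pr : List A × List A, pr.2 ∈ X ∧ v = pr.1 ++ pr.2 := by
      rintro v ⟨x, hx, r, hr⟩
      exact ⟨(r, x), hx, hr.symm⟩
    set dec : List A → List A × List A := fun v =>
      if h : ∃ pr : List A × List A, pr.2 ∈ X ∧ v = pr.1 ++ pr.2 then h.choose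
      else ([], v) with hdec
    have hdecs : ∀ v, (∃ x ∈ X, x <:+ v) → (dec v).2 ∈ X ∧ v = (dec v).1 ++ (dec v).2 := by
      intro v hv
      have h := hex v hv
      simp only [hdec, dif_pos h]
      exact h.choose_spec
    have hTU : ((Ln A n).filter (fun v => ∃ x ∈ X, x <:+ v)).card ≤
        ((Ln A n).filter (fun v => ∃ x ∈ X, x <+: v)).card := by
      refine Finset.card_le_card_of_injOn (fun v => (dec v).2 ++ (dec v).1) ?_ ?_
      · intro v hv
        obtain ⟨hvl, hvs⟩ := Finset.mem_filter.mp hv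
        obtain ⟨hmem, heq⟩ := hdecs v hvs
        refine Finset.mem_filter.mpr ⟨?_, (dec v).2, hmem, List.prefix_append _ _⟩
        rw [mem_Ln] at hvl ⊢
        rw [List.length_append]
        rw [heq, List.length_append] at hvl
        omega
      · intro v₁ h₁ v₂ h₂ heq₀
        have heq : (dec v₁).2 ++ (dec v₁).1 = (dec v₂).2 ++ (dec v₂).1 := heq₀
        simp only [Finset.coe_filter, Set.mem_setOf_eq] at h₁ h₂
        obtain ⟨hm₁, he₁⟩ := hdecs v₁ h₁.2
        obtain ⟨hm₂, he₂⟩ := hdecs v₂ h₂.2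
        have hpre₂ : (dec v₂).2 <+: (dec v₁).2 ++ (dec v₁).1 := by
          rw [heq]; exact List.prefix_append _ _
        have hxx : (dec v₁).2 = (dec v₂).2 := by
          rcases List.prefix_or_prefix_of_prefix (List.prefix_append (dec v₁).2 (dec v₁).1)
            hpre₂ with h | h
          · exact hp.2 _ hm₁ _ hm₂ h
          · exact (hp.2 _ hm₂ _ hm₁ h).symm
        rw [hxx] at heq
        rw [he₁, he₂, List.append_cancel_left heq, hxx]
    have hU₀card : ((Ln A (n - d)).image (v₀ ++ ·)).card = q ^ (n - d) := by
      rw [Finset.card_image_of_injective _ (fun a b h => List.append_cancel_left h), card_Ln]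
    have hU₀sub : (Ln A (n - d)).image (v₀ ++ ·) ⊆ Ln A n := by
      intro z hz
      obtain ⟨t, ht, rfl⟩ := Finset.mem_image.mp hz
      rw [mem_Ln, List.length_append]
      rw [mem_Ln] at ht
      omega
    have hdisj : Disjoint ((Ln A n).filter (fun v => ∃ x ∈ X, x <+: v))
        ((Ln A (n - d)).image (v₀ ++ ·)) := by
      rw [Finset.disjoint_left]
      intro z hzU hzU₀
      obtain ⟨t, ht, rfl⟩ := Finset.mem_image.mp hzU₀
      obtain ⟨-, x, hx, hpre⟩ := Finset.mem_filter.mp hzU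
      rcases List.prefix_or_prefix_of_prefix hpre (List.prefix_append v₀ t) with h | h
      · exact hv₀ ⟨x, hx, Or.inl h⟩
      · exact hv₀ ⟨x, hx, Or.inr h⟩
    have h2 : ((Ln A n).filter (fun v => ∃ x ∈ X, x <+: v)).card + q ^ (n - d) ≤ q ^ n := by
      rw [← hU₀card, ← Finset.card_union_of_disjoint hdisj, ← card_Ln (A := A) n]
      exact Finset.card_le_card (Finset.union_subset (Finset.filter_subset _ _) hU₀sub)
    have h3 := le_trans h1 (Nat.add_le_add_right hTU _)
    have h4 : q ^ n + q ^ (n - d) ≤ q ^ n + (avoid n).card := by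
      calc q ^ n + q ^ (n - d)
          ≤ (((Ln A n).filter (fun v => ∃ x ∈ X, x <+: v)).card + (avoid n).card) + q ^ (n - d) :=
            Nat.add_le_add_right h3 _
        _ = (((Ln A n).filter (fun v => ∃ x ∈ X, x <+: v)).card + q ^ (n - d)) + (avoid n).card := by
            ring
        _ ≤ q ^ n + (avoid n).card := Nat.add_le_add_right h2 _
    exact Nat.le_of_add_le_add_left h4
  -- Step B : upper bound on `avoid`
  set K := ((Ln A L).erase w).card with hKdef
  have stepB : ∀ m, (avoid (L * m)).card ≤ K ^ m := by
    intro m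
    induction m with
    | zero =>
      simp only [Nat.mul_zero, pow_zero]
      calc (avoid 0).card ≤ (Ln A 0).card := Finset.card_le_card (Finset.filter_subset _ _)
        _ = 1 := by rw [card_Ln, pow_zero]
    | succ m ih =>
      have hLle : L ≤ L * (m + 1) := Nat.le_mul_of_pos_right _ (Nat.succ_pos m)
      have hmap : ∀ v ∈ avoid (L * (m + 1)),
          (v.take L, v.drop L) ∈ ((Ln A L).erase w) ×ˢ avoid (L * m) := by
        intro v hv
        obtain ⟨hvl, hva⟩ := Finset.mem_filter.mp hv
        rw [mem_Ln] at hvl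
        refine Finset.mem_product.mpr ⟨Finset.mem_erase.mpr ⟨?_, mem_Ln.mpr ?_⟩,
          Finset.mem_filter.mpr ⟨mem_Ln.mpr ?_, ?_⟩⟩
        · intro h
          apply hva [] (v.drop L)
          rw [List.nil_append, ← h, List.take_append_drop]
        · rw [List.length_take]
          omega
        · rw [List.length_drop, hvl, Nat.mul_succ]
          omega
        · intro u t h
          have h' : v.drop L = u ++ w ++ t := h
          apply hva (v.take L ++ u) t
          conv_lhs => rw [← List.take_append_drop L v, h']
          simp [List.append_assoc]
      have hinj : Set.InjOn (fun v : List A => (v.take L, v.drop L)) (avoid (L * (m + 1))) := by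
        intro a _ b _ h
        simp only [Prod.mk.injEq] at h
        rw [← List.take_append_drop L a, ← List.take_append_drop L b, h.1, h.2]
      calc (avoid (L * (m + 1))).card ≤ (((Ln A L).erase w) ×ˢ avoid (L * m)).card :=
            Finset.card_le_card_of_injOn _ hmap hinj
        _ = K * (avoid (L * m)).card := by rw [Finset.card_product]
        _ ≤ K * K ^ m := Nat.mul_le_mul_left _ ih
        _ = K ^ (m + 1) := (pow_succ' K m).symm
  have hK1 : K + 1 = q ^ L := by
    rw [hKdef, Finset.card_erase_add_one (mem_Ln.mpr hLdef.symm), card_Ln]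
  have main : ∀ m, d ≤ L * m → (K + 1) ^ m ≤ K ^ m * q ^ d := by
    intro m hm
    have h1 : q ^ (L * m - d) ≤ K ^ m := le_trans (stepA _ hm) (stepB m)
    calc (K + 1) ^ m = (q ^ L) ^ m := by rw [hK1]
      _ = q ^ (L * m) := by rw [← pow_mul]
      _ = q ^ (L * m - d) * q ^ d := by rw [← pow_add]; congr 1; omega
      _ ≤ K ^ m * q ^ d := Nat.mul_le_mul_right _ h1
  rcases Nat.eq_zero_or_pos K with hK0 | hKpos
  · have hd : d ≤ L * (d + 1) := by nlinarith
    have hcontra := main (d + 1) hd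
    rw [hK0] at hcontra
    simp at hcontra
  · have hq2 : 2 ≤ q ^ L := by rw [← hK1]; omega
    have hq : 2 ≤ q := by
      by_contra h
      push_neg at h
      have hle : q ^ L ≤ 1 := by
        calc q ^ L ≤ 1 ^ L := Nat.pow_le_pow_left (by omega) L
          _ = 1 := one_pow L
      omega
    have binom : ∀ m : ℕ, K ^ (m + 1) + (m + 1) * K ^ m ≤ (K + 1) ^ (m + 1) := by
      intro m
      induction m with
      | zero => simp [pow_succ]
      | succ m ih =>
        have h1 : (K + 1) ^ (m + 2) = (K + 1) * (K + 1) ^ (m + 1) := by ring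
        rw [h1]
        have h2 : (K + 1) * (K ^ (m + 1) + (m + 1) * K ^ m) ≤ (K + 1) * (K + 1) ^ (m + 1) :=
          Nat.mul_le_mul_left _ ih
        have h3 : K ^ (m + 2) + (m + 2) * K ^ (m + 1) ≤
            (K + 1) * (K ^ (m + 1) + (m + 1) * K ^ m) := by
          have e1 : K ^ (m + 2) = K * K ^ (m + 1) := by ring
          have e2 : K ^ (m + 1) = K * K ^ m := by ring
          rw [e1, e2]
          have e3 : (K + 1) * (K * K ^ m + (m + 1) * K ^ m)
              = K * (K * K ^ m) + (m + 2) * (K * K ^ m) + (m + 1) * K ^ m := by ring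
          rw [e3]
          exact Nat.le_add_right _ _
        exact le_trans h3 h2
    have base : 2 * K ^ K ≤ (K + 1) ^ K := by
      obtain ⟨K', hK'⟩ : ∃ K', K = K' + 1 := ⟨K - 1, by omega⟩
      rw [hK']
      have hb := binom K'
      rw [hK'] at hb
      have e : (K' + 1) * (K' + 1) ^ K' = (K' + 1) ^ (K' + 1) := (pow_succ' _ _).symm
      rw [e] at hb
      linarith
    have tower : ∀ j : ℕ, 2 ^ j * K ^ (K * j) ≤ (K + 1) ^ (K * j) := by
      intro j
      induction j with
      | zero => simp
      | succ j ih =>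
        have e1 : K * (j + 1) = K * j + K := by ring
        rw [e1]
        calc 2 ^ (j + 1) * K ^ (K * j + K)
            = (2 ^ j * K ^ (K * j)) * (2 * K ^ K) := by ring
          _ ≤ (K + 1) ^ (K * j) * (2 * K ^ K) := Nat.mul_le_mul_right _ ih
          _ ≤ (K + 1) ^ (K * j) * (K + 1) ^ K := Nat.mul_le_mul_left _ base
          _ = (K + 1) ^ (K * j + K) := (pow_add _ _ _).symm
    have hdm : d ≤ L * (K * q ^ d) := by
      have h1 : d < 2 ^ d := (Nat.lt_two_pow_self (n := d))
      have h2 : (2 : ℕ) ^ d ≤ q ^ d := Nat.pow_le_pow_left hq d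
      have h3 : q ^ d ≤ K * q ^ d := Nat.le_mul_of_pos_left _ hKpos
      have h4 : K * q ^ d ≤ L * (K * q ^ d) := Nat.le_mul_of_pos_left _ hL
      linarith
    have hmm := main (K * q ^ d) hdm
    have hstrict : K ^ (K * q ^ d) * q ^ d < 2 ^ (q ^ d) * K ^ (K * q ^ d) := by
      have h5 : q ^ d < 2 ^ (q ^ d) := (Nat.lt_two_pow_self (n := q ^ d))
      have h6 : 0 < K ^ (K * q ^ d) := pow_pos hKpos _
      calc K ^ (K * q ^ d) * q ^ d < K ^ (K * q ^ d) * 2 ^ (q ^ d) :=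
            mul_lt_mul_of_pos_left h5 h6
        _ = 2 ^ (q ^ d) * K ^ (K * q ^ d) := by ring
    have hlt := lt_of_le_of_lt hmm hstrict
    exact absurd (tower (q ^ d)) (not_le.mpr hlt)

theorem key' [Fintype A] (X : Set (List A)) (hs : IsSuffixCode X)
    (w : List A) (hw : w ≠ []) (hthin : ∀ u t, u ++ w ++ t ∉ X)
    (hP : ∀ v, PCmp X v) (v₀ : List A) (hv₀ : ¬ SCmp X v₀) : False := by
  set Xr : Set (List A) := {v | v.reverse ∈ X} with hXr
  have hpr : IsPrefixCode Xr := by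
    constructor
    · intro h
      exact hs.1 h
    · intro u hu u' hu' hpre
      have h := hs.2 _ hu _ hu' (List.reverse_suffix.mpr hpre)
      exact List.reverse_injective h
  refine key Xr hpr w.reverse (by simpa using hw) ?_ ?_ v₀.reverse ?_
  · intro u t h
    apply hthin t.reverse u.reverse
    have h2 : (u ++ w.reverse ++ t).reverse ∈ X := h
    simpa [List.reverse_append, ← List.append_assoc] using h2
  · intro v
    obtain ⟨x, hx, h | h⟩ := hP v.reverse
    · refine ⟨x.reverse, by simp only [hXr, Set.mem_setOf_eq, List.reverse_reverse]; exact hx, Or.inl ?_⟩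
      have := List.reverse_suffix.mpr h
      simpa using this
    · refine ⟨x.reverse, by simp only [hXr, Set.mem_setOf_eq, List.reverse_reverse]; exact hx, Or.inr ?_⟩
      have := List.reverse_suffix.mpr h
      simpa using this
  · rintro ⟨x, hx, h | h⟩
    · refine hv₀ ⟨x.reverse, hx, Or.inl ?_⟩
      have := List.reverse_suffix.mpr h
      simpa using this
    · refine hv₀ ⟨x.reverse, hx, Or.inr ?_⟩
      have := List.reverse_suffix.mpr h
      simpa using this

theorem bothCmp [Fintype A] {X : Set (List A)} (hne : X.Nonempty)
    (hmax : IsMaximalBifixCode X) (hthin : IsThin X) :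
    (∀ v, PCmp X v) ∧ (∀ v, SCmp X v) := by
  obtain ⟨w, hw, hwit⟩ := thin_nonempty_witness hne hthin
  rcases dichotomy hne hmax with h | h
  · refine ⟨h, fun v => ?_⟩
    by_contra hv
    exact key' X hmax.1.2 w hw hwit h v hv
  · refine ⟨fun v => ?_, h⟩
    by_contra hv
    exact key X hmax.1.1 w hw hwit h v hv

end Stmt7Aux


/-- If `X` and `Y` are bifix codes, then `XY` and `YX` are bifix codes and the
products `XY` and `YX` are unambiguous; if moreover `X` and `Y` are maximal bifix
codes and thin, then `XY` and `YX` are maximal bifix codes and thin. -/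
theorem stmt7 {A : Type*} [Fintype A] [Nonempty A]
    (X Y : Set (List A)) (hX : X.Nonempty) (hY : Y.Nonempty)
    (hXe : ([] : List A) ∉ X) (hYe : ([] : List A) ∉ Y) :
    (IsBifixCode X → IsBifixCode Y →
      IsBifixCode (ProdL X Y) ∧ IsBifixCode (ProdL Y X) ∧ Unamb X Y ∧ Unamb Y X) ∧
    (IsMaximalBifixCode X → IsThin X → IsMaximalBifixCode Y → IsThin Y →
      IsMaximalBifixCode (ProdL X Y) ∧ IsThin (ProdL X Y) ∧
      IsMaximalBifixCode (ProdL Y X) ∧ IsThin (ProdL Y X)) := by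
  constructor
  · intro hBX hBY
    exact ⟨⟨prefixCode_prod hBX.1 hBY.1, suffixCode_prod hBX.2 hBY.2⟩,
           ⟨prefixCode_prod hBY.1 hBX.1, suffixCode_prod hBY.2 hBX.2⟩,
           unamb_of_prefixCode hBX.1, unamb_of_prefixCode hBY.1⟩
  · intro hmX htX hmY htY
    obtain ⟨hPX, hSX⟩ := bothCmp hX hmX htX
    obtain ⟨hPY, hSY⟩ := bothCmp hY hmY htY
    have hBXY : IsBifixCode (ProdL X Y) :=
      ⟨prefixCode_prod hmX.1.1 hmY.1.1, suffixCode_prod hmX.1.2 hmY.1.2⟩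
    have hBYX : IsBifixCode (ProdL Y X) :=
      ⟨prefixCode_prod hmY.1.1 hmX.1.1, suffixCode_prod hmY.1.2 hmX.1.2⟩
    exact ⟨maxBifix_of_cmp hBXY (pcmp_prod hY hPX hPY), thin_prod htX htY,
           maxBifix_of_cmp hBYX (pcmp_prod hX hPY hPX), thin_prod htY htX⟩
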